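/- Let μ be an infinite cardinal and let ϖ be the least infinite cardinal whose cofinality differs from cf(μ) (so ϖ is ω or ω₁). If ⟨X_i : i < ϖ⟩ is a ⊆-increasing sequence of robust vertex sets in a graph G, then ⋃_{i<ϖ} X_i is robust. -/

import Mathlib

open Cardinal

universe u v

/-- A well-ordering of the vertices of `G` in which every vertex has
fewer than `μ` neighbours preceding it (a *good* well-ordering for `μ`). -/
def HasGoodOrder {V : Type u} (G : SimpleGraph V) (μ : Cardinal.{u}) : Prop :=
  ∃ r : V → V → Prop, IsWellOrder V r ∧ ∀ v : V, #{w : V | G.Adj v w ∧ r w v} < μ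

/-- The colouring number of `G`: the least cardinal `κ` admitting a
well-ordering of the vertices in which each vertex has fewer than `κ`
earlier neighbours. -/
noncomputable def col {V : Type u} (G : SimpleGraph V) : Cardinal.{u} :=
  sInf {μ : Cardinal.{u} | HasGoodOrder G μ}

/-- `X` is robust (for `μ`): every vertex outside `X` has fewer than `μ`
neighbours inside `X`. -/
def Robust {V : Type u} (G : SimpleGraph V) (μ : Cardinal.{u}) (X : Set V) : Prop :=
  ∀ v ∉ X, #(G.neighborSet v ∩ X : Set V) < μ

/-- `G` contains a `μ`-barricade as a subgraph: disjoint vertex sets `A`, `B`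
with `|A| < |B|` such that every vertex of `B` has at least `μ` neighbours in `A`. -/
def HasBarricade {V : Type u} (G : SimpleGraph V) (μ : Cardinal.{u}) : Prop :=
  ∃ A B : Set V, Disjoint A B ∧ #A < #B ∧
    ∀ b ∈ B, μ ≤ #(G.neighborSet b ∩ A : Set V)

/-- `G` contains a `μ`-obstruction of type I as a subgraph: disjoint sets `A`, `B`
with `|A| = λ ≥ μ`, `|B| = λ⁺`, every vertex of `B` having at least `μ`
neighbours in `A` and every vertex of `A` having `λ⁺` neighbours in `B`. -/
def HasTypeIObstruction {V : Type u} (G : SimpleGraph V) (μ : Cardinal.{u}) : Prop :=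
  ∃ (A B : Set V) (lam : Cardinal.{u}), Disjoint A B ∧ μ ≤ lam ∧
    #A = lam ∧ #B = Order.succ lam ∧
    (∀ b ∈ B, μ ≤ #(G.neighborSet b ∩ A : Set V)) ∧
    (∀ a ∈ A, #(G.neighborSet a ∩ B : Set V) = Order.succ lam)

/-- `G` itself is a `μ`-obstruction of type I: a bipartite graph with
bipartition `(A, B)` satisfying the type I conditions. -/
def IsTypeIObstruction {V : Type u} (G : SimpleGraph V) (μ : Cardinal.{u}) : Prop :=
  ∃ (A B : Set V) (lam : Cardinal.{u}), Disjoint A B ∧ A ∪ B = Set.univ ∧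
    (∀ a b, G.Adj a b → (a ∈ A ∧ b ∈ B) ∨ (a ∈ B ∧ b ∈ A)) ∧
    μ ≤ lam ∧ #A = lam ∧ #B = Order.succ lam ∧
    (∀ b ∈ B, μ ≤ #(G.neighborSet b ∩ A : Set V)) ∧
    (∀ a ∈ A, #(G.neighborSet a ∩ B : Set V) = Order.succ lam)

/-- `C` is closed and unbounded in the ordinal `o`. -/
def IsClubIn (C : Set Ordinal.{v}) (o : Ordinal.{v}) : Prop :=
  (∀ a < o, ∃ b ∈ C, a ≤ b ∧ b < o) ∧
  (∀ a < o, a ≠ 0 → sSup (C ∩ Set.Iio a) = a → a ∈ C)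

/-- `S` is stationary in the ordinal `o`: it meets every club subset of `o`. -/
def IsStationaryIn (S : Set Ordinal.{v}) (o : Ordinal.{v}) : Prop :=
  ∀ C : Set Ordinal.{v}, IsClubIn C o → (S ∩ C ∩ Set.Iio o).Nonempty

/-- The set `T_H` of vertices `α` (ordinals) with `cf α = cf μ`, whose set of
neighbours below `α` has order type `μ` and supremum `α`. -/
noncomputable def typeIITarget (H : SimpleGraph Ordinal.{v}) (μ : Cardinal.{v}) :
    Set Ordinal.{v} :=
  {α | α.cof = μ.ord.cof ∧
    Ordinal.type (Subrel ((· < ·) : Ordinal.{v} → Ordinal.{v} → Prop)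
      (· ∈ H.neighborSet α ∩ Set.Iio α)) = Ordinal.lift.{v + 1} μ.ord ∧
    sSup (H.neighborSet α ∩ Set.Iio α) = α}

/-- `H` is a `μ`-obstruction of type II with vertex set the regular cardinal
`κ > μ` (realised as the ordinals below `κ`): `T_H` is stationary in `κ`. -/
def IsTypeIIObstruction (H : SimpleGraph Ordinal.{v}) (μ κ : Cardinal.{v}) : Prop :=
  μ < κ ∧ κ.IsRegular ∧ (∀ a b, H.Adj a b → a < κ.ord ∧ b < κ.ord) ∧
  IsStationaryIn (typeIITarget H μ) κ.ord

/-- `G` contains a `μ`-obstruction of type II as a subgraph. -/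
def HasTypeIIObstruction {V : Type u} (G : SimpleGraph V) (μ : Cardinal.{v}) : Prop :=
  ∃ (κ : Cardinal.{v}) (H : SimpleGraph Ordinal.{v}) (f : Ordinal.{v} → V),
    Set.InjOn f (Set.Iio κ.ord) ∧ (∀ a b, H.Adj a b → G.Adj (f a) (f b)) ∧
    IsTypeIIObstruction H μ κ

/-- `G` contains a complete subgraph on `μ` vertices. -/
def HasCompleteSubgraph {V : Type u} (G : SimpleGraph V) (μ : Cardinal.{u}) : Prop :=
  ∃ S : Set V, #S = μ ∧ S.Pairwise G.Adj

/-- `G` contains an induced copy of the complete bipartite graph `K_{k,ω}`. -/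
def HasInducedKkOmega {V : Type u} (G : SimpleGraph V) (k : ℕ) : Prop :=
  ∃ A B : Set V, Disjoint A B ∧ #A = (k : Cardinal.{u}) ∧ #B = ℵ₀ ∧
    (∀ a ∈ A, ∀ b ∈ B, G.Adj a b) ∧
    (∀ a ∈ A, ∀ a' ∈ A, a ≠ a' → ¬ G.Adj a a') ∧
    (∀ b ∈ B, ∀ b' ∈ B, b ≠ b' → ¬ G.Adj b b')

/-- with `ϖ` the least infinite cardinal whose cofinality differs
from `cf(μ)`, the union of a `⊆`-increasing `ϖ`-sequence of robust sets is robust. -/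
theorem stmt7 {V : Type u} (G : SimpleGraph V) (μ ϖ : Cardinal.{u}) (hμ : ℵ₀ ≤ μ)
    (hϖ : ℵ₀ ≤ ϖ) (hcof : ϖ.ord.cof ≠ μ.ord.cof)
    (hleast : ∀ ν : Cardinal.{u}, ℵ₀ ≤ ν → ν.ord.cof ≠ μ.ord.cof → ϖ ≤ ν)
    (X : Ordinal.{u} → Set V)
    (hmono : ∀ i j : Ordinal.{u}, i ≤ j → j < ϖ.ord → X i ⊆ X j)
    (hrob : ∀ i < ϖ.ord, Robust G μ (X i)) :
    Robust G μ (⋃ i ∈ Set.Iio ϖ.ord, X i) := by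
  intro v hv
  have hrobv : ∀ i < ϖ.ord, #(G.neighborSet v ∩ X i : Set V) < μ := fun i hi =>
    hrob i hi v fun h => hv (Set.mem_biUnion hi h)
  -- ϖ is regular, and either ϖ = ℵ₀ or (ϖ = ℵ₁ and cf μ = ℵ₀)
  have key : ϖ.ord.cof = ϖ ∧ (ϖ = ℵ₀ ∨ ϖ = ℵ₁ ∧ μ.ord.cof = ℵ₀) := by
    by_cases h : μ.ord.cof = ℵ₀
    · have h2 : ϖ ≠ ℵ₀ := by
        rintro rfl
        rw [Cardinal.ord_aleph0, Ordinal.cof_omega0] at hcof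
        exact hcof h.symm
      have h1 : ϖ ≤ ℵ₁ :=
        hleast ℵ₁ Cardinal.aleph0_lt_aleph_one.le
          (by rw [Cardinal.isRegular_aleph_one.cof_eq, h]
              exact Cardinal.aleph0_lt_aleph_one.ne')
      have h3 : ϖ = ℵ₁ := le_antisymm h1 (by
        rw [← Cardinal.succ_aleph0]
        exact Order.succ_le_of_lt (lt_of_le_of_ne hϖ (Ne.symm h2)))
      exact ⟨by rw [h3, Cardinal.isRegular_aleph_one.cof_eq], Or.inr ⟨h3, h⟩⟩
    · have h1 : ϖ = ℵ₀ := le_antisymm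
        (hleast ℵ₀ le_rfl (by rw [Cardinal.ord_aleph0, Ordinal.cof_omega0]
                              exact fun e => h e.symm)) hϖ
      exact ⟨by rw [h1, Cardinal.ord_aleph0, Ordinal.cof_omega0], Or.inl h1⟩
  obtain ⟨hreg, hcase⟩ := key
  have hιmk : #(ϖ.ord.ToType) = ϖ := by rw [Cardinal.mk_toType, Cardinal.card_ord]
  set e := (Ordinal.ToType.mk (o := ϖ.ord)) with he
  set Y : ϖ.ord.ToType → Set V := fun x => G.neighborSet v ∩ X (e.symm x).1 with hYdef
  have hYlt : ∀ x, #(Y x) < μ := fun x => hrobv _ (e.symm x).2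
  have hbdd : BddAbove (Set.range fun x => #(Y x)) := Cardinal.bddAbove_range _
  set c := ⨆ x, #(Y x) with hc
  have hsub : ∀ (x : ϖ.ord.ToType) (J : Ordinal), (e.symm x).1 ≤ J → J < ϖ.ord →
      Y x ⊆ G.neighborSet v ∩ X J :=
    fun x J hle hJ => Set.inter_subset_inter_right _ (hmono _ _ hle hJ)
  -- the union rewritten over the small index type
  have hU : (G.neighborSet v ∩ ⋃ i ∈ Set.Iio ϖ.ord, X i : Set V) = ⋃ x, Y x := by
    ext w
    simp only [hYdef, Set.mem_inter_iff, Set.mem_iUnion]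
    constructor
    · rintro ⟨hw, i, hi, hXi⟩
      exact ⟨e ⟨i, hi⟩, hw, by simpa using hXi⟩
    · rintro ⟨x, hw, hXi⟩
      exact ⟨hw, _, (e.symm x).2, hXi⟩
  -- the supremum of the sizes is < μ
  have hclt : c < μ := by
    rcases hcase with h0 | ⟨h1, hcofμ⟩
    · have hne : μ.ord.cof ≠ ℵ₀ := fun hh => hcof (by rw [hreg, h0, hh])
      have hcof' : ℵ₀ < μ.ord.cof :=
        lt_of_le_of_ne (Ordinal.aleph0_le_cof.2 (Cardinal.isSuccLimit_ord hμ)) (Ne.symm hne)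
      exact Ordinal.iSup_lt (by rw [hιmk, h0]; exact hcof') hYlt
    · haveI : Nonempty ϖ.ord.ToType := Ordinal.nonempty_toType_iff.2 (by
        have h9 : (0 : Ordinal) < ϖ.ord :=
          Cardinal.lt_ord.2 (by simpa using Cardinal.aleph0_pos.trans_le hϖ)
        exact h9.ne')
      by_contra hge
      push_neg at hge
      obtain ⟨κ, f, hlsub, hκ⟩ := Ordinal.exists_lsub_cof μ.ord
      rw [hcofμ] at hκ
      have hflt : ∀ k, (f k).card < μ := fun k =>
        Cardinal.lt_ord.1 (by rw [← hlsub]; exact Ordinal.lt_lsub f k)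
      have hchoose : ∀ k, ∃ x, (f k).card < #(Y x) := fun k =>
        exists_lt_of_lt_ciSup (lt_of_lt_of_le (hflt k) hge)
      choose g hg using hchoose
      have hJlt : (⨆ k, (e.symm (g k)).1) < ϖ.ord :=
        Ordinal.iSup_lt_ord (by rw [hκ, hreg, h1]; exact Cardinal.aleph0_lt_aleph_one)
          fun k => (e.symm (g k)).2
      set J := ⨆ k, (e.symm (g k)).1 with hJdef
      have hJb : ∀ k, (e.symm (g k)).1 ≤ J := fun k => le_ciSup (Ordinal.bddAbove_range _) k
      have hmu : μ ≤ #(G.neighborSet v ∩ X J : Set V) := by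
        by_contra hlt
        push_neg at hlt
        have hlt' : (#(G.neighborSet v ∩ X J : Set V)).ord < Ordinal.lsub f := by
          rw [hlsub]; exact Cardinal.ord_lt_ord.2 hlt
        obtain ⟨k, hk⟩ := Ordinal.lt_lsub_iff.1 hlt'
        have h5 : #(G.neighborSet v ∩ X J : Set V) ≤ (f k).card := by
          rw [← Cardinal.card_ord (#(G.neighborSet v ∩ X J : Set V))]
          exact Ordinal.card_le_card hk
        exact absurd ((h5.trans_lt (hg k)).trans_le
          (Cardinal.mk_le_mk_of_subset (hsub (g k) J (hJb k) hJlt))) (lt_irrefl _)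
      exact absurd (hrobv J hJlt) (not_lt.2 hmu)
  rw [hU]
  have hUle : #(⋃ x, Y x) ≤ #(ϖ.ord.ToType) * c := Cardinal.mk_iUnion_le Y
  by_cases hϖμ : ϖ < μ
  · exact lt_of_le_of_lt hUle (by rw [hιmk]; exact Cardinal.mul_lt_of_lt hμ hϖμ hclt)
  · push_neg at hϖμ
    rcases hcase with h0 | ⟨h1, hcofμ⟩
    · rw [h0] at hϖμ
      have hμ0 : μ = ℵ₀ := le_antisymm hϖμ hμ
      rw [h0, hμ0] at hcof
      exact absurd rfl hcof
    · have hμ1 : μ ≠ ℵ₁ := by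
        rintro rfl
        rw [Cardinal.isRegular_aleph_one.cof_eq] at hcofμ
        exact Cardinal.aleph0_lt_aleph_one.ne' hcofμ
      have hμlt : μ < ℵ₁ := lt_of_le_of_ne (h1 ▸ hϖμ) hμ1
      have hμa : μ = ℵ₀ := le_antisymm
        (by rw [← Cardinal.succ_aleph0] at hμlt; exact Order.lt_succ_iff.1 hμlt) hμ
      by_contra hbig
      push_neg at hbig
      have hinf : Infinite ↥(⋃ x, Y x) := Cardinal.infinite_iff.2 (hμa ▸ hbig)
      haveI := hinf
      let emb : ℕ ↪ ↥(⋃ x, Y x) := Infinite.natEmbedding _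
      have hmem : ∀ n : ℕ, ∃ x, (emb n : V) ∈ Y x := fun n => Set.mem_iUnion.1 (emb n).2
      choose g hg using hmem
      have hJlt : (⨆ n, (e.symm (g n)).1) < ϖ.ord :=
        Ordinal.iSup_lt_ord_lift (by rw [hreg, h1]; simpa using Cardinal.aleph0_lt_aleph_one)
          fun n => (e.symm (g n)).2
      set J := ⨆ n, (e.symm (g n)).1 with hJdef
      have hJb : ∀ n, (e.symm (g n)).1 ≤ J := fun n => le_ciSup (Ordinal.bddAbove_range _) n
      have hJin : ∀ n, (emb n : V) ∈ G.neighborSet v ∩ X J := fun n =>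
        hsub (g n) J (hJb n) hJlt (hg n)
      have hinj : Function.Injective
          (fun n : ULift.{u} ℕ => (⟨(emb n.down : V), hJin n.down⟩ :
            ↥(G.neighborSet v ∩ X J))) := by
        intro a b hab
        simp only [Subtype.mk.injEq] at hab
        exact ULift.ext a b (emb.injective (Subtype.ext hab))
      have hle : ℵ₀ ≤ #(G.neighborSet v ∩ X J : Set V) := by
        have := Cardinal.mk_le_of_injective hinj
        rwa [Cardinal.mk_uLift, Cardinal.mk_nat, Cardinal.lift_aleph0] at this
      exact absurd (hrobv J hJlt) (not_lt.2 (hμa.symm ▸ hle))
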